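/- Let T be a string over an alphabet of size σ and suppose T[i..i+2ℓ) is a parameterized square (i.e., T[i..i+ℓ) parameterized matches T[i+ℓ..i+2ℓ)). Define the string R of the same length as T by R[j] = E(T[1..j]), where E(X) is the number of distinct characters in the longest suffix of X[1..|X|-1] avoiding the letter X[|X|]. Then R[i..i+2ℓ) is a σ-mismatch square, i.e., the Hamming distance between R[i..i+ℓ) and R[i+ℓ..i+2ℓ) is at most σ. -/

import Mathlib

/-- The set of distinct characters of a string. -/
def alph (X : List ℤ) : Set ℤ := {a | a ∈ X}

/-- Parameterized matching. -/
def PMatch (X Y : List ℤ) : Prop :=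
  X.length = Y.length ∧ ∃ f : ℤ → ℤ, Set.BijOn f (alph X) (alph Y) ∧ X.map f = Y

/-- E(X) = number of distinct characters of the longest suffix of X[1..|X|-1]
avoiding the character X[|X|]. -/
def Efun (X : List ℤ) : ℤ :=
  match X.getLast? with
  | none => 0
  | some c => ((X.dropLast.reverse.takeWhile (fun a => a != c)).dedup.length : ℤ)

/-- The substring T[i..i+len) for a 1-indexed position i. -/
def seg (T : List ℤ) (i len : ℕ) : List ℤ := (T.drop (i - 1)).take len

/-- Hamming distance of two equal-length strings. -/
def hamming (X Y : List ℤ) : ℕ :=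
  ((Finset.range X.length).filter (fun j => X.getD j 0 ≠ Y.getD j 0)).card

lemma efun_take (T : List ℤ) (n : ℕ) (hn : n < T.length) :
    Efun (T.take (n+1)) =
      (((T.take n).reverse.takeWhile (fun a => a != T.getD n 0)).dedup.length : ℤ) := by
  have hlen : (T.take (n+1)).length = n+1 := by
    simp [List.length_take]; omega
  have hlast : (T.take (n+1)).getLast? = some (T.getD n 0) := by
    rw [List.getLast?_eq_getElem?, hlen]
    simp only [Nat.add_sub_cancel]
    rw [List.getElem?_eq_getElem (by rw [hlen]; omega)]
    simp [List.getElem_take, List.getD_eq_getElem T 0 hn, List.getElem?_eq_getElem hn]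
  have hdl : (T.take (n+1)).dropLast = T.take n := by
    rw [List.dropLast_eq_take, hlen]
    simp [List.take_take]
  unfold Efun
  rw [hlast, hdl]

lemma takeWhile_last_occ (L : List ℤ) (c : ℤ) (q : ℕ) (hq : q < L.length)
    (hc : L.getD q 0 = c) (hafter : ∀ m, q < m → m < L.length → L.getD m 0 ≠ c) :
    L.reverse.takeWhile (fun a => a != c) = (L.drop (q+1)).reverse := by
  have hsplit : L = L.take (q+1) ++ L.drop (q+1) := (List.take_append_drop _ _).symm
  conv_lhs => rw [hsplit]
  rw [List.reverse_append, List.takeWhile_append]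
  have hall : (L.drop (q+1)).reverse.takeWhile (fun a => a != c) = (L.drop (q+1)).reverse := by
    rw [List.takeWhile_eq_self_iff]
    intro x hx
    rw [List.mem_reverse] at hx
    obtain ⟨k, hk, hxk⟩ := List.getElem_of_mem hx
    have hklen : q + 1 + k < L.length := by
      have := hk; rw [List.length_drop] at this; omega
    have : x = L.getD (q+1+k) 0 := by
      rw [List.getD_eq_getElem L 0 hklen, ← hxk, List.getElem_drop]
    have hne := hafter (q+1+k) (by omega) hklen
    rw [← this] at hne
    simpa using hne
  rw [hall]
  simp only [List.length_reverse, if_pos rfl]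
  have htk : (L.take (q+1)).reverse = c :: (L.take q).reverse := by
    rw [List.take_succ, List.getElem?_eq_getElem hq, List.reverse_append]
    rw [List.getD_eq_getElem L 0 hq] at hc
    simp [hc]
  rw [htk, List.takeWhile_cons_of_neg (by simp)]
  simp

lemma getD_take (T : List ℤ) (n m : ℕ) (h : m < n) (h2 : m < T.length) :
    (T.take n).getD m 0 = T.getD m 0 := by
  rw [List.getD_eq_getElem _ 0 (by simp [List.length_take]; omega),
      List.getD_eq_getElem _ 0 h2, List.getElem_take]

set_option maxHeartbeats 1000000 in
lemma key_lemma (T : List ℤ) (ℓ a : ℕ) (f : ℤ → ℤ) (S : Set ℤ)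
    (ha2 : a + 2 * ℓ ≤ T.length)
    (hf_pt : ∀ p, a ≤ p → p < a + ℓ → f (T.getD p 0) = T.getD (p + ℓ) 0)
    (hmem : ∀ p, a ≤ p → p < a + ℓ → T.getD p 0 ∈ S)
    (hinj : Set.InjOn f S)
    (j : ℕ) (hj : j < ℓ) (q : ℕ) (hq1 : a ≤ q) (hq2 : q < a + j)
    (hqc : T.getD q 0 = T.getD (a + j) 0)
    (hafter : ∀ m, q < m → m < a + j → T.getD m 0 ≠ T.getD (a + j) 0) :
    Efun (T.take (a + j + 1)) = Efun (T.take (a + j + ℓ + 1)) := by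
  have hcc' : f (T.getD (a + j) 0) = T.getD (a + j + ℓ) 0 := hf_pt (a + j) (by omega) (by omega)
  rw [efun_take T (a + j) (by omega), efun_take T (a + j + ℓ) (by omega)]
  rw [takeWhile_last_occ (T.take (a + j)) (T.getD (a + j) 0) q
      (by simp [List.length_take]; omega)
      (by rw [getD_take T _ _ (by omega) (by omega)]; exact hqc)
      (by intro m hm1 hm2
          rw [List.length_take] at hm2
          rw [getD_take T _ _ (by omega) (by omega)]
          exact hafter m hm1 (by omega))]
  rw [takeWhile_last_occ (T.take (a + j + ℓ)) (T.getD (a + j + ℓ) 0) (q + ℓ)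
      (by simp [List.length_take]; omega)
      (by rw [getD_take T _ _ (by omega) (by omega), ← hf_pt q hq1 (by omega), hqc, hcc'])
      (by intro m hm1 hm2
          rw [List.length_take] at hm2
          obtain ⟨p, rfl⟩ : ∃ p, m = p + ℓ := ⟨m - ℓ, by omega⟩
          rw [getD_take T _ _ (by omega) (by omega)]
          intro hcontra
          have h1 : f (T.getD p 0) = T.getD (p + ℓ) 0 := hf_pt p (by omega) (by omega)
          have h2 : T.getD p 0 = T.getD (a + j) 0 := by
            apply hinj (hmem p (by omega) (by omega)) (hmem (a + j) (by omega) (by omega))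
            rw [h1, hcontra, ← hcc']
          exact hafter p (by omega) (by omega) h2)]
  -- now compare the two dropped suffixes
  have hL2 : (T.take (a + j + ℓ)).drop (q + ℓ + 1) =
      ((T.take (a + j)).drop (q + 1)).map f := by
    apply List.ext_getElem
    · simp [List.length_drop, List.length_take]; omega
    · intro k h1 h2
      rw [List.getElem_map, List.getElem_drop, List.getElem_drop,
          List.getElem_take, List.getElem_take]
      have hlen1 : k < a + j - (q + 1) := by
        simp [List.length_drop, List.length_take] at h2; omega
      rw [← List.getD_eq_getElem T 0 (show q + ℓ + 1 + k < T.length by omega),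
          ← List.getD_eq_getElem T 0 (show q + 1 + k < T.length by omega),
          show q + ℓ + 1 + k = q + 1 + k + ℓ from by omega,
          ← hf_pt (q + 1 + k) (by omega) (by omega)]
  rw [hL2]
  have hsub : ∀ x ∈ (T.take (a + j)).drop (q + 1), x ∈ S := by
    intro x hx
    obtain ⟨k, hk, hxk⟩ := List.getElem_of_mem hx
    have hk' : k < a + j - (q + 1) := by
      simp [List.length_drop, List.length_take] at hk; omega
    have : x = T.getD (q + 1 + k) 0 := by
      rw [← hxk, List.getElem_drop, List.getElem_take, List.getD_eq_getElem _ 0 (by omega)]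
    rw [this]
    exact hmem _ (by omega) (by omega)
  congr 1
  rw [← List.card_toFinset, ← List.card_toFinset, List.toFinset_reverse,
      List.toFinset_reverse]
  have himg : (((T.take (a + j)).drop (q + 1)).map f).toFinset =
      ((T.take (a + j)).drop (q + 1)).toFinset.image f := by
    generalize (T.take (a + j)).drop (q + 1) = l
    ext x; simp
  rw [himg, Finset.card_image_of_injOn]
  intro x hx y hy hxy
  rw [Finset.mem_coe, List.mem_toFinset] at hx hy
  exact hinj (hsub x hx) (hsub y hy) hxy

set_option maxHeartbeats 1000000 in
theorem psquare_encoding_is_sigma_mismatch_square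
    (T : List ℤ) (σ i ℓ : ℕ)
    (hσ : T.dedup.length ≤ σ)
    (hi : 1 ≤ i) (hℓ : 1 ≤ ℓ) (hbound : i + 2 * ℓ ≤ T.length + 1)
    (hsq : PMatch (seg T i ℓ) (seg T (i + ℓ) ℓ)) :
    let R : List ℤ := (List.range T.length).map (fun j => Efun (T.take (j + 1)))
    hamming (seg R i ℓ) (seg R (i + ℓ) ℓ) ≤ σ := by
  intro R
  obtain ⟨hlenXY, f, hbij, hmap⟩ := hsq
  obtain ⟨a, rfl⟩ : ∃ a, i = a + 1 := ⟨i - 1, by omega⟩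
  have ha2 : a + 2 * ℓ ≤ T.length := by omega
  have hseg1 : seg T (a + 1) ℓ = (T.drop a).take ℓ := by simp [seg]
  have hseg2 : seg T (a + 1 + ℓ) ℓ = (T.drop (a + ℓ)).take ℓ := by
    rw [seg, show a + 1 + ℓ - 1 = a + ℓ from by omega]
  rw [hseg1, hseg2] at hmap hbij
  -- the alphabet set
  set S : Set ℤ := alph ((T.drop a).take ℓ) with hS
  have hget : ∀ p, a ≤ p → p < a + ℓ → ∀ (h : p - a < ((T.drop a).take ℓ).length),
      ((T.drop a).take ℓ)[p - a] = T.getD p 0 := by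
    intro p hp hp2 h
    rw [List.getElem_take, List.getElem_drop, List.getD_eq_getElem _ 0 (by omega)]
    congr 1; omega
  have hlen1 : ((T.drop a).take ℓ).length = ℓ := by
    simp [List.length_take, List.length_drop]; omega
  have hf_pt : ∀ p, a ≤ p → p < a + ℓ → f (T.getD p 0) = T.getD (p + ℓ) 0 := by
    intro p hp hp2
    have hm : p - a < (((T.drop a).take ℓ).map f).length := by
      simp [hlen1]; omega
    have h1 := List.getElem_of_eq hmap hm
    rw [List.getElem_map, hget p hp hp2] at h1
    rw [h1, List.getElem_take, List.getElem_drop, List.getD_eq_getElem _ 0 (by omega)]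
    congr 1; omega
  have hmem : ∀ p, a ≤ p → p < a + ℓ → T.getD p 0 ∈ S := by
    intro p hp hp2
    have h : p - a < ((T.drop a).take ℓ).length := by omega
    rw [← hget p hp hp2 h]
    exact List.getElem_mem h
  have hinj : Set.InjOn f S := hbij.injOn
  -- values of R on the relevant segments
  have hRlen : R.length = T.length := by simp [R]
  have hRget : ∀ p, p < T.length → R.getD p 0 = Efun (T.take (p + 1)) := by
    intro p hp
    rw [List.getD_eq_getElem _ 0 (by rw [hRlen]; exact hp)]
    simp [R]
  have hsegR1 : ∀ j, j < ℓ → (seg R (a + 1) ℓ).getD j 0 = Efun (T.take (a + j + 1)) := by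
    intro j hj
    rw [seg, show a + 1 - 1 = a from by omega,
        List.getD_eq_getElem _ 0 (by simp [List.length_take, List.length_drop, hRlen]; omega),
        List.getElem_take, List.getElem_drop, ← hRget (a + j) (by omega)]
    rw [List.getD_eq_getElem _ 0 (by rw [hRlen]; omega)]
  have hsegR2 : ∀ j, j < ℓ → (seg R (a + 1 + ℓ) ℓ).getD j 0 = Efun (T.take (a + j + ℓ + 1)) := by
    intro j hj
    rw [seg, show a + 1 + ℓ - 1 = a + ℓ from by omega,
        List.getD_eq_getElem _ 0 (by simp [List.length_take, List.length_drop, hRlen]; omega),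
        List.getElem_take, List.getElem_drop, ← hRget (a + j + ℓ) (by omega)]
    rw [List.getD_eq_getElem _ 0 (by rw [hRlen]; omega)]
    congr 1; omega
  have hlenR1 : (seg R (a + 1) ℓ).length = ℓ := by
    rw [seg]; simp [List.length_take, List.length_drop, hRlen]; omega
  -- the set of "first in-window occurrences"
  set F : Finset ℕ := (Finset.range ℓ).filter
      (fun j => ∀ m < j, T.getD (a + m) 0 ≠ T.getD (a + j) 0) with hF
  have hsubset : (Finset.range (seg R (a + 1) ℓ).length).filter
      (fun j => (seg R (a + 1) ℓ).getD j 0 ≠ (seg R (a + 1 + ℓ) ℓ).getD j 0) ⊆ F := by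
    intro j hj
    rw [Finset.mem_filter, Finset.mem_range, hlenR1] at hj
    obtain ⟨hjℓ, hjne⟩ := hj
    rw [hF, Finset.mem_filter, Finset.mem_range]
    refine ⟨hjℓ, ?_⟩
    by_contra hcon
    push_neg at hcon
    obtain ⟨m, hm, hmeq⟩ := hcon
    -- find the last occurrence
    have hPq := Nat.findGreatest_spec (P := fun p => a ≤ p ∧ T.getD p 0 = T.getD (a + j) 0)
      (n := a + j - 1) (m := a + m) (by omega) ⟨by omega, hmeq⟩
    set q := Nat.findGreatest (fun p => a ≤ p ∧ T.getD p 0 = T.getD (a + j) 0) (a + j - 1)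
      with hqdef
    obtain ⟨hq1, hqc⟩ := hPq
    have hqle : q ≤ a + j - 1 := Nat.findGreatest_le _
    have hq2 : q < a + j := by omega
    have hafter : ∀ p, q < p → p < a + j → T.getD p 0 ≠ T.getD (a + j) 0 := by
      intro p hp1 hp2 hpc
      exact Nat.findGreatest_is_greatest hp1 (by omega) ⟨by omega, hpc⟩
    have := key_lemma T ℓ a f S ha2 hf_pt hmem hinj j hjℓ q hq1 hq2 hqc hafter
    rw [hsegR1 j hjℓ, hsegR2 j hjℓ] at hjne
    exact hjne this
  calc hamming (seg R (a + 1) ℓ) (seg R (a + 1 + ℓ) ℓ)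
      ≤ F.card := Finset.card_le_card hsubset
    _ ≤ T.toFinset.card := by
        apply Finset.card_le_card_of_injOn (fun j => T.getD (a + j) 0)
        · intro j hj
          rw [hF, Finset.mem_coe, Finset.mem_filter, Finset.mem_range] at hj
          beta_reduce
          rw [Finset.mem_coe, List.mem_toFinset, List.getD_eq_getElem _ 0 (by omega)]
          exact List.getElem_mem _
        · intro x hx y hy hxy
          rw [Finset.mem_coe, hF, Finset.mem_filter, Finset.mem_range] at hx hy
          rcases lt_trichotomy x y with h | h | h
          · exact absurd hxy (hy.2 x h)
          · exact h
          · exact absurd hxy.symm (hx.2 y h)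
    _ = T.dedup.length := List.card_toFinset T
    _ ≤ σ := hσ
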